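/- Let B be a cherry blossom with receptacle r: a node set of odd cardinality with matching M of size (|B|−1)/2 on G[B], unique unmatched node r, such that every v ∈ B \ {r} has an alternating path of even length and one of odd length to r. Then there exists a node v ∈ B \ {r} adjacent to r by an edge not in M such that v has an even-length M-alternating path to r; consequently B contains an odd cycle through r whose edges alternate in M except at r. -/

import Mathlib

open Finset

def IsMatchingS {V : Type*} [DecidableEq V] (M : Finset (Sym2 V)) : Prop :=
  (∀ e ∈ M, ¬ e.IsDiag) ∧
  (∀ e ∈ M, ∀ f ∈ M, e ≠ f → ∀ v : V, v ∈ e → v ∉ f)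

def pathEdges {V : Type*} (l : List V) : List (Sym2 V) :=
  List.zipWith (fun a b => s(a, b)) l l.tail

lemma getElem_idx_congr {α : Type*} {l : List α} {i j : ℕ} (h : i = j) {hi : i < l.length} :
    l[i]'hi = l[j]'(h ▸ hi) := by subst h; rfl

lemma pathEdges_length {V : Type*} (l : List V) : (pathEdges l).length = l.length - 1 := by
  simp [pathEdges]

lemma pathEdges_getElem {V : Type*} (l : List V) (i : ℕ) (hi : i < (pathEdges l).length)
    (h2 : i + 1 < l.length) :
    (pathEdges l)[i] = s(l[i]'(by omega), l[i+1]) := by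
  simp [pathEdges, List.getElem_zipWith, List.getElem_tail]

/-- A simple path whose edges lie in `Eg` and alternate w.r.t. the matching `M`;
if `startMatched` is `true` the first edge is matched (edges at even positions are
matched), otherwise the first edge is unmatched. -/
def IsAltPath {V : Type*} [DecidableEq V] (Eg M : Finset (Sym2 V))
    (startMatched : Bool) (l : List V) : Prop :=
  l.Nodup ∧ (∀ e ∈ pathEdges l, e ∈ Eg) ∧
  ∀ i (hi : i < (pathEdges l).length),
    ((pathEdges l)[i]'hi ∈ M ↔ (Even i ↔ startMatched = true))

/-- There is an even-length `M`-alternating path from `v` to `r` inside `B`,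
starting (at `v`) with a matched edge. -/
def EvenAltPathIn {V : Type*} [DecidableEq V] (Eg M : Finset (Sym2 V))
    (B : Finset V) (v r : V) : Prop :=
  ∃ l : List V, IsAltPath Eg M true l ∧ (∀ x ∈ l, x ∈ B) ∧
    l.head? = some v ∧ l.getLast? = some r ∧ Even (l.length - 1)

/-- There is an odd-length `M`-alternating path from `v` to `r` inside `B`,
starting (at `v`) with an unmatched edge. -/
def OddAltPathIn {V : Type*} [DecidableEq V] (Eg M : Finset (Sym2 V))
    (B : Finset V) (v r : V) : Prop :=
  ∃ l : List V, IsAltPath Eg M false l ∧ (∀ x ∈ l, x ∈ B) ∧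
    l.head? = some v ∧ l.getLast? = some r ∧ Odd (l.length - 1)

/-- The edges of a cycle given by a nonempty list of vertices. -/
def cycleEdges {V : Type*} (l : List V) (h : l ≠ []) : List (Sym2 V) :=
  pathEdges l ++ [s(l.getLast h, l.head h)]

/-- Every cherry blossom contains a traditional blossom: some node `v ≠ r` is
joined to the receptacle `r` by an unmatched edge and has an even-length
alternating path to `r`; consequently `B` contains an odd cycle through `r`
alternating except at `r`. -/
theorem cherry_blossom_contains_blossom
    {V : Type*} [DecidableEq V]
    (Eg : Finset (Sym2 V)) (hEg : ∀ e ∈ Eg, ¬ e.IsDiag)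
    (B : Finset V) (hodd : Odd B.card) (hB3 : 3 ≤ B.card)
    (r : V) (hrB : r ∈ B)
    (M : Finset (Sym2 V)) (hM : IsMatchingS M) (hMEg : M ⊆ Eg)
    (hMB : ∀ e ∈ M, ∀ x : V, x ∈ e → x ∈ B)
    (hcard : 2 * M.card + 1 = B.card)
    (hrfree : ∀ e ∈ M, r ∉ e)
    (hcov : ∀ v ∈ B, v ≠ r → ∃ e ∈ M, v ∈ e)
    (hcherry : ∀ v ∈ B, v ≠ r →
      EvenAltPathIn Eg M B v r ∧ OddAltPathIn Eg M B v r) :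
    (∃ v ∈ B, v ≠ r ∧ s(v, r) ∈ Eg ∧ s(v, r) ∉ M ∧ EvenAltPathIn Eg M B v r) ∧
    (∃ c : List V, ∃ hc : c ≠ [], c.Nodup ∧ (∀ x ∈ c, x ∈ B) ∧
      c.head hc = r ∧ Odd (cycleEdges c hc).length ∧
      3 ≤ (cycleEdges c hc).length ∧
      (∀ e ∈ cycleEdges c hc, e ∈ Eg) ∧
      (∀ i (hi : i < (cycleEdges c hc).length),
        ((cycleEdges c hc)[i]'hi ∈ M ↔ Odd i))) := by
  classical
  obtain ⟨v0, hv0B, hv0r⟩ : ∃ v ∈ B, v ≠ r := by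
    have h : (B.erase r).Nonempty := by
      rw [← Finset.card_pos, Finset.card_erase_of_mem hrB]; omega
    obtain ⟨v, hv⟩ := h
    exact ⟨v, Finset.mem_of_mem_erase hv, Finset.ne_of_mem_erase hv⟩
  obtain ⟨-, l0, hl0alt, hl0B, hl0h, hl0l, hl0odd⟩ := hcherry v0 hv0B hv0r
  have hne0 : l0 ≠ [] := by rintro rfl; simp at hl0h
  have hn2 : 2 ≤ l0.length := by
    rcases hl0odd with ⟨k, hk⟩
    have : 0 < l0.length := List.length_pos_iff.mpr hne0
    omega
  have hlast0 : l0[l0.length-1]'(by omega) = r := by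
    rw [List.getLast?_eq_getLast hne0] at hl0l
    rw [List.getLast_eq_getElem] at hl0l
    exact Option.some_injective _ hl0l
  set w := l0[l0.length-2]'(by omega) with hw
  have hedge : (pathEdges l0)[l0.length-2]'(by rw [pathEdges_length]; omega) = s(w, r) := by
    rw [pathEdges_getElem l0 (l0.length-2) (by rw [pathEdges_length]; omega) (by omega)]
    rw [← hw]
    have e2 : l0[l0.length-2+1]'(by omega) = r := by
      rw [getElem_idx_congr (show l0.length-2+1 = l0.length-1 by omega)]
      exact hlast0
    rw [e2]
  have hwr : w ≠ r := by
    intro h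
    have heq : l0[l0.length-2]'(by omega) = l0[l0.length-1]'(by omega) := by
      rw [hlast0, ← hw, h]
    have := (List.Nodup.getElem_inj_iff hl0alt.1).mp heq
    omega
  have hEgwr : s(w, r) ∈ Eg := by
    rw [← hedge]
    exact hl0alt.2.1 _ (List.getElem_mem _)
  have hnM : s(w, r) ∉ M := fun h => hrfree _ h (by simp)
  have hwB : w ∈ B := hl0B _ (List.getElem_mem _)
  obtain ⟨⟨l, hlalt, hlB, hlh, hll, hleven⟩, -⟩ := hcherry w hwB hwr
  refine ⟨⟨w, hwB, hwr, hEgwr, hnM, l, hlalt, hlB, hlh, hll, hleven⟩, ?_⟩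
  have hnel : l ≠ [] := by rintro rfl; simp at hlh
  have hlpos : 0 < l.length := List.length_pos_iff.mpr hnel
  have hheadl : l[0]'hlpos = w := by
    rw [List.head?_eq_head hnel, List.head_eq_getElem] at hlh
    exact Option.some_injective _ hlh
  have hlastl : l[l.length-1]'(by omega) = r := by
    rw [List.getLast?_eq_getLast hnel, List.getLast_eq_getElem] at hll
    exact Option.some_injective _ hll
  have hm3 : 3 ≤ l.length := by
    have h2 : l.length ≠ 1 := by
      intro h
      apply hwr
      rw [← hheadl, ← hlastl]
      exact getElem_idx_congr (by omega)
    rcases hleven with ⟨k, hk⟩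
    omega
  have hmodd : l.length % 2 = 1 := by
    rcases hleven with ⟨k, hk⟩
    omega
  have hc : l.reverse ≠ [] := by simpa using hnel
  have hclen : l.reverse.length = l.length := by simp
  have hpelen : (pathEdges l.reverse).length = l.length - 1 := by
    rw [pathEdges_length, hclen]
  have hcyclen : (cycleEdges l.reverse hc).length = l.length := by
    simp only [cycleEdges, List.length_append, List.length_singleton, hpelen]; omega
  have hchead : l.reverse.head hc = r := by
    rw [List.head_reverse, List.getLast_eq_getElem]
    exact hlastl
  have hclast : l.reverse.getLast hc = w := by
    rw [List.getLast_reverse, List.head_eq_getElem]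
    exact hheadl
  have key1 : ∀ i (h : i < l.length - 1),
      (cycleEdges l.reverse hc)[i]'(by omega) =
      (pathEdges l)[l.length-2-i]'(by rw [pathEdges_length]; omega) := by
    intro i h
    simp only [cycleEdges]
    rw [ List.getElem_append_left (by rw [hpelen]; omega)]
    rw [pathEdges_getElem l.reverse i (by omega) (by rw [hclen]; omega)]
    rw [pathEdges_getElem l (l.length-2-i) (by rw [pathEdges_length]; omega) (by omega)]
    rw [List.getElem_reverse, List.getElem_reverse]
    rw [Sym2.eq_swap]
    have e1 : l[l.length-1-(i+1)]'(by omega) = l[l.length-2-i]'(by omega) :=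
      getElem_idx_congr (show l.length-1-(i+1) = l.length-2-i by omega)
    have e2 : l[l.length-1-i]'(by omega) = l[l.length-2-i+1]'(by omega) :=
      getElem_idx_congr (show l.length-1-i = l.length-2-i+1 by omega)
    rw [e1, e2]
  have key2 : (cycleEdges l.reverse hc)[l.length-1]'(by omega) = s(w, r) := by
    simp only [cycleEdges]
    rw [List.getElem_append_right hpelen.le]
    simp [hpelen, hclast, hchead]
  refine ⟨l.reverse, hc, List.nodup_reverse.mpr hlalt.1, ?_, hchead,
    by rw [hcyclen, Nat.odd_iff]; exact hmodd, by omega, ?_, ?_⟩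
  · intro x hx; exact hlB x (List.mem_reverse.mp hx)
  · intro e he
    simp only [cycleEdges, List.mem_append] at he
    rcases he with he | he
    · obtain ⟨i, hi, rfl⟩ := List.mem_iff_getElem.mp he
      have hi' : i < l.length - 1 := by rw [hpelen] at hi; omega
      have heq : (pathEdges l.reverse)[i]'hi =
          (pathEdges l)[l.length-2-i]'(by rw [pathEdges_length]; omega) := by
        rw [← key1 i hi']
        simp only [cycleEdges]
        rw [List.getElem_append_left (by rw [hpelen]; omega)]
      rw [heq]
      exact hlalt.2.1 _ (List.getElem_mem _)
    · simp only [List.mem_singleton] at he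
      rw [he, hclast, hchead]
      exact hEgwr
  · intro i hi
    rw [hcyclen] at hi
    rcases lt_or_ge i (l.length - 1) with h | h
    · rw [key1 i h, hlalt.2.2 (l.length-2-i) (by rw [pathEdges_length]; omega)]
      have hsub : Even (l.length - 2 - i) ↔ (Even (l.length-2) ↔ Even i) :=
        Nat.even_sub (by omega)
      simp only [iff_true, hsub, Nat.even_iff, Nat.odd_iff]
      omega
    · have hieq : i = l.length - 1 := by omega
      subst hieq
      rw [key2]
      simp only [hnM, false_iff, Nat.odd_iff]
      omega
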